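/- Let f(x) = f(0) + Σᵢ₌₁ⁿ xᵢ^{2d} + f_α x^α with |α| = 2d and f_α x^α not a square. If (f_α/2d)^{2d}·α^α ≤ 1, then f(x) ≥ f(0) for all x ∈ ℝⁿ. -/

import Mathlib

open Finset

/-- For `f(x) = f(0) + ∑ᵢ xᵢ^(2d) + f_α x^α` with `|α| = 2d` and `f_α x^α`
not a square, if `(f_α/2d)^(2d)·α^α ≤ 1` then `f(x) ≥ f(0)` for all `x ∈ ℝⁿ`. -/
theorem stmt_12 (n d : ℕ) (hd : 1 ≤ d) (α : Fin n → ℕ)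
    (hαeq : ∑ i, α i = 2 * d)
    (fα : ℝ) (hfα : fα ≠ 0) (hns : ¬ (0 ≤ fα ∧ ∀ i, Even (α i)))
    (f0 : ℝ)
    (hle : (fα / (2 * (d : ℝ))) ^ (2 * d) * ∏ i, ((α i : ℝ)) ^ (α i) ≤ 1) :
    ∀ x : Fin n → ℝ,
      f0 ≤ f0 + (∑ i, x i ^ (2 * d)) + fα * ∏ i, x i ^ (α i) := by
  intro x
  have hD : (0:ℝ) < 2 * d := by positivity
  set D : ℝ := 2 * d with hDdef
  set w : Fin n → ℝ := fun i => (α i : ℝ) / D with hw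
  set z : Fin n → ℝ := fun i => (D / (α i : ℝ)) * x i ^ (2 * d) with hz
  set C : ℝ := ∏ i, ((α i : ℝ) / D) ^ ((α i : ℝ) / D) with hC
  have hxpow : ∀ i, (0:ℝ) ≤ x i ^ (2 * d) := fun i => (even_two_mul d).pow_nonneg _
  have hS : (0:ℝ) ≤ ∑ i, x i ^ (2 * d) := Finset.sum_nonneg fun i _ => hxpow i
  have hwnn : ∀ i ∈ Finset.univ, (0:ℝ) ≤ w i := fun i _ => by positivity
  have hwsum : ∑ i : Fin n, w i = 1 := by
    rw [hw]
    simp only []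
    rw [← Finset.sum_div, ← Nat.cast_sum, hαeq]
    field_simp [hDdef]
    simp [hDdef]
  have hznn : ∀ i ∈ Finset.univ, (0:ℝ) ≤ z i := fun i _ =>
    mul_nonneg (div_nonneg hD.le (Nat.cast_nonneg _)) (hxpow i)
  have amgm := Real.geom_mean_le_arith_mean_weighted Finset.univ w z hwnn hwsum hznn
  have hrhs : ∑ i, w i * z i ≤ ∑ i, x i ^ (2 * d) := by
    apply Finset.sum_le_sum
    intro i _
    rcases eq_or_ne (α i) 0 with h | h
    · simp [hw, hz, h, hxpow i]
    · have hα : (α i : ℝ) ≠ 0 := Nat.cast_ne_zero.mpr h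
      rw [hw, hz]
      simp only []
      rw [← mul_assoc]
      have : (α i : ℝ) / D * (D / (α i : ℝ)) = 1 := by field_simp
      rw [this, one_mul]
  have hCnn : (0:ℝ) ≤ C := by
    apply Finset.prod_nonneg
    intro i _
    exact Real.rpow_nonneg (by positivity) _
  have hlhs : C * ∏ i, z i ^ w i = ∏ i, |x i| ^ (α i) := by
    rw [hC, ← Finset.prod_mul_distrib]
    apply Finset.prod_congr rfl
    intro i _
    rcases eq_or_ne (α i) 0 with h | h
    · simp [hw, hz, h]
    · have hα : (0:ℝ) < (α i : ℝ) := by positivity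
      rw [hw, hz]
      simp only []
      rw [Real.mul_rpow (by positivity) (hxpow i), ← mul_assoc,
        ← Real.mul_rpow (by positivity) (by positivity)]
      have h1 : (α i : ℝ) / D * (D / (α i : ℝ)) = 1 := by field_simp
      rw [h1, Real.one_rpow, one_mul]
      have hxabs : x i ^ (2 * d) = |x i| ^ (2 * d) := by
        rw [← abs_pow]
        exact (abs_of_nonneg (hxpow i)).symm
      rw [hxabs, ← Real.rpow_natCast (|x i|) (2*d), ← Real.rpow_mul (abs_nonneg _)]
      have h2 : ((2*d : ℕ) : ℝ) * ((α i : ℝ) / D) = ((α i : ℕ) : ℝ) := by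
        rw [hDdef]; push_cast; field_simp
      rw [h2, Real.rpow_natCast]
  have hfC : |fα| * C ≤ 1 := by
    have hCpow : C ^ (2 * d) = (∏ i, ((α i : ℝ)) ^ (α i)) / D ^ (2 * d) := by
      rw [hC, ← Finset.prod_pow]
      have step : ∀ i ∈ Finset.univ, (((α i : ℝ) / D) ^ ((α i : ℝ) / D)) ^ (2*d)
          = ((α i : ℝ)) ^ (α i) / D ^ (α i) := by
        intro i _
        rw [← Real.rpow_natCast (((α i : ℝ) / D) ^ ((α i : ℝ) / D)) (2*d),
          ← Real.rpow_mul (by positivity)]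
        have h2 : (α i : ℝ) / D * ((2*d : ℕ) : ℝ) = ((α i : ℕ) : ℝ) := by
          rw [hDdef]; push_cast; field_simp
        rw [h2, Real.rpow_natCast, div_pow]
      rw [Finset.prod_congr rfl step, Finset.prod_div_distrib,
        Finset.prod_pow_eq_pow_sum, hαeq]
    have hpow : (|fα| * C) ^ (2 * d) ≤ 1 := by
      rw [mul_pow, hCpow]
      have hfabs : |fα| ^ (2 * d) = fα ^ (2 * d) := (even_two_mul d).pow_abs fα
      calc |fα| ^ (2*d) * ((∏ i, ((α i : ℝ)) ^ (α i)) / D ^ (2*d))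
          = (fα / D) ^ (2*d) * ∏ i, ((α i : ℝ)) ^ (α i) := by
            rw [hfabs, div_pow]; ring
        _ ≤ 1 := hle
    exact (pow_le_one_iff_of_nonneg (mul_nonneg (abs_nonneg _) hCnn) (by omega)).mp hpow
  have key : |fα| * ∏ i, |x i| ^ (α i) ≤ ∑ i, x i ^ (2 * d) := by
    calc |fα| * ∏ i, |x i| ^ (α i) = |fα| * (C * ∏ i, z i ^ w i) := by rw [hlhs]
    _ ≤ |fα| * (C * ∑ i, x i ^ (2*d)) := by
        apply mul_le_mul_of_nonneg_left _ (abs_nonneg _)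
        exact mul_le_mul_of_nonneg_left (le_trans amgm hrhs) hCnn
    _ = (|fα| * C) * ∑ i, x i ^ (2*d) := by ring
    _ ≤ 1 * ∑ i, x i ^ (2*d) := mul_le_mul_of_nonneg_right hfC hS
    _ = _ := one_mul _
  have habs : |fα * ∏ i, x i ^ (α i)| ≤ ∑ i, x i ^ (2*d) := by
    rw [abs_mul, abs_prod]
    simpa [abs_pow] using key
  nlinarith [neg_abs_le (fα * ∏ i, x i ^ (α i)), habs]
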